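/- Let G = (V,E) be a graph and u,v ∈ V nonadjacent. Then {u,v} is globally linked in G in ℝ^1 if and only if there exist two internally disjoint u,v-paths in G (equivalently, κ_G(u,v) ≥ 2). -/

import Mathlib

open SimpleGraph Walk Finset Cardinal

namespace GLAux

universe u

variable {V : Type*}

lemma exists_suffix_meet {G : SimpleGraph V} {v : V} (S : Set V) :
    ∀ {x : V} (R : G.Walk x v), R.IsPath → (∃ y ∈ R.support, y ∈ S) →
    ∃ z, z ∈ S ∧ ∃ W : G.Walk z v, W.IsPath ∧ (∀ y ∈ W.support, y ∈ R.support) ∧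
      (∀ y ∈ W.support, y ∈ S → y = z) := by
  intro x R
  induction R with
  | nil =>
    rintro _ ⟨y, hy1, hy2⟩
    simp only [Walk.support_nil, List.mem_singleton] at hy1
    subst hy1
    exact ⟨y, hy2, Walk.nil, by simp [Walk.IsPath.nil], by simp, by simp⟩
  | @cons x c v h R ih =>
    rintro hp ⟨y, hy1, hy2⟩
    by_cases hex : ∃ y ∈ R.support, y ∈ S
    · obtain ⟨z, hz, W, hW, hsub, huniq⟩ := ih hp.of_cons hex
      exact ⟨z, hz, W, hW, fun y hy => by
        simp only [Walk.support_cons, List.mem_cons]; exact Or.inr (hsub y hy), huniq⟩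
    · have hyx : y = x := by
        simp only [Walk.support_cons, List.mem_cons] at hy1
        rcases hy1 with rfl | hy1
        · rfl
        · exact absurd ⟨y, hy1, hy2⟩ hex
      subst hyx
      refine ⟨y, hy2, Walk.cons h R, hp, fun a ha => ha, ?_⟩
      intro a ha haS
      simp only [Walk.support_cons, List.mem_cons] at ha
      rcases ha with rfl | ha
      · rfl
      · exact absurd ⟨a, ha, haS⟩ hex

def TwoPaths (G : SimpleGraph V) (u v : V) : Prop :=
  ∃ P₁ P₂ : G.Walk u v, P₁.IsPath ∧ P₂.IsPath ∧ P₁ ≠ P₂ ∧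
    ∀ w : V, w ∈ P₁.support → w ∈ P₂.support → w = u ∨ w = v

lemma end_not_mem_takeUntil [DecidableEq V] {G : SimpleGraph V} {u w z : V}
    (P : G.Walk u w) (hP : P.IsPath) (hz : z ∈ P.support) (hzw : z ≠ w) :
    w ∉ (P.takeUntil z hz).support := by
  have hspec := P.take_spec hz
  have hnd : P.support.Nodup := hP.support_nodup
  rw [← hspec, Walk.support_append, List.nodup_append] at hnd
  intro hmem
  have hw : w ∈ (P.dropUntil z hz).support.tail := by
    have h1 : w ∈ (P.dropUntil z hz).support := Walk.end_mem_support _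
    rw [Walk.support_eq_cons (P.dropUntil z hz), List.mem_cons] at h1
    rcases h1 with h1 | h1
    · exact absurd h1.symm hzw
    · exact h1
  exact hnd.2.2 w hmem w hw rfl

lemma concat_isPath {G : SimpleGraph V} {u w v : V} (P : G.Walk u w) (hP : P.IsPath)
    (h : G.Adj w v) (hv : v ∉ P.support) : (P.concat h).IsPath := by
  rw [Walk.isPath_def, Walk.support_concat, List.nodup_append]
  exact ⟨hP.support_nodup, List.nodup_singleton v, by
    intro a ha b hb hab
    simp only [List.mem_singleton] at hb
    exact hv (by rw [← hb, ← hab]; exact ha)⟩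

/-- Case: `v` already lies on `P₁`. -/

lemma extend_case1 [DecidableEq V] {G : SimpleGraph V} {u w v : V} (hadj : G.Adj w v)
    (hvu : v ≠ u) (hvw : v ≠ w)
    (P₁ P₂ : G.Walk u w) (h1 : P₁.IsPath) (h2 : P₂.IsPath)
    (hdisj : ∀ y, y ∈ P₁.support → y ∈ P₂.support → y = u ∨ y = w)
    (hv1 : v ∈ P₁.support) : TwoPaths G u v := by
  have hv2 : v ∉ P₂.support := fun hmem => by
    rcases hdisj v hv1 hmem with h | h
    · exact hvu h
    · exact hvw h
  have hwA : w ∉ (P₁.takeUntil v hv1).support := end_not_mem_takeUntil P₁ h1 hv1 hvw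
  refine ⟨P₁.takeUntil v hv1, P₂.concat hadj, h1.takeUntil hv1, concat_isPath P₂ h2 hadj hv2, ?_, ?_⟩
  · intro hEq
    have : w ∈ (P₁.takeUntil v hv1).support := by
      rw [hEq, Walk.support_concat, List.mem_append]
      exact Or.inl (Walk.end_mem_support P₂)
    exact hwA this
  · intro y hyA hyB
    rw [Walk.support_concat, List.mem_append] at hyB
    rcases hyB with hyB | hyB
    · rcases hdisj y (P₁.support_takeUntil_subset hv1 hyA) hyB with h | h
      · exact Or.inl h
      · exact absurd (h ▸ hyA) hwA
    · exact Or.inr (List.mem_singleton.mp hyB)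

lemma extend_case2 [DecidableEq V] {G : SimpleGraph V} {u w v z : V} (hadj : G.Adj w v)
    (P₁ P₂ : G.Walk u w) (h1 : P₁.IsPath) (h2 : P₂.IsPath)
    (hdisj : ∀ y, y ∈ P₁.support → y ∈ P₂.support → y = u ∨ y = w)
    (hv2 : v ∉ P₂.support)
    (W : G.Walk z v) (hW : W.IsPath) (hz1 : z ∈ P₁.support)
    (hWw : w ∉ W.support)
    (hWS : ∀ y ∈ W.support, (y ∈ P₁.support ∨ y ∈ P₂.support) → y = z) :
    TwoPaths G u v := by
  set T := P₁.takeUntil z hz1 with hT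
  have hzw : z ≠ w := fun h => hWw (h ▸ Walk.start_mem_support W)
  have hwT : w ∉ T.support := end_not_mem_takeUntil P₁ h1 hz1 hzw
  have hznt : z ∉ W.support.tail := by
    have := hW.support_nodup
    rw [Walk.support_eq_cons W, List.nodup_cons] at this
    exact this.1
  have hTsub : ∀ y ∈ T.support, y ∈ P₁.support := fun y hy => P₁.support_takeUntil_subset hz1 hy
  -- A := T.append W
  have hApath : (T.append W).IsPath := by
    rw [Walk.isPath_def, Walk.support_append, List.nodup_append]
    refine ⟨(h1.takeUntil hz1).support_nodup, hW.support_nodup.tail, ?_⟩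
    intro a haT b haW hab
    rw [← hab] at haW
    have haW' : a ∈ W.support := List.mem_of_mem_tail haW
    have : a = z := hWS a haW' (Or.inl (hTsub a haT))
    subst this
    exact hznt haW
  have hBpath : (P₂.concat hadj).IsPath := concat_isPath P₂ h2 hadj hv2
  refine ⟨T.append W, P₂.concat hadj, hApath, hBpath, ?_, ?_⟩
  · intro hEq
    have hwB : w ∈ (T.append W).support := by
      rw [hEq, Walk.support_concat, List.mem_append]
      exact Or.inl (Walk.end_mem_support P₂)
    rw [Walk.support_append, List.mem_append] at hwB
    rcases hwB with h | h
    · exact hwT h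
    · exact hWw (List.mem_of_mem_tail h)
  · intro y hyA hyB
    rw [Walk.support_concat, List.mem_append] at hyB
    rcases hyB with hyB | hyB
    · rw [Walk.support_append, List.mem_append] at hyA
      rcases hyA with hyA | hyA
      · rcases hdisj y (hTsub y hyA) hyB with h | h
        · exact Or.inl h
        · exact absurd (h ▸ hyA) hwT
      · have : y = z := hWS y (List.mem_of_mem_tail hyA) (Or.inr hyB)
        subst this
        exact absurd hyA hznt
    · exact Or.inr (List.mem_singleton.mp hyB)

lemma menger_two [DecidableEq V] {G : SimpleGraph V} :
    ∀ (n : ℕ) (u v : V), G.dist u v = n → u ≠ v → ¬ G.Adj u v → G.Reachable u v →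
    (∀ c, c ≠ u → c ≠ v → ∃ W : G.Walk u v, c ∉ W.support) →
    TwoPaths G u v := by
  intro n
  induction n using Nat.strong_induction_on with
  | _ n IH =>
    intro u v hd hne hnadj hreach hyp
    obtain ⟨Q, hQlen⟩ := hreach.exists_walk_length_eq_dist
    have hQpath : Q.IsPath := Q.isPath_of_length_eq_dist (hQlen.trans rfl)
    rw [hd] at hQlen
    obtain _ | _ | m := n
    · exact absurd (hreach.dist_eq_zero_iff.mp hd) hne
    · exact absurd (SimpleGraph.dist_eq_one_iff_adj.mp hd) hnadj
    obtain _ | m := m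
    · -- base case: dist = 2
      cases Q with
      | nil => simp at hQlen
      | cons h₁ Q₁ =>
        cases Q₁ with
        | nil => simp at hQlen
        | cons h₂ Q₂ =>
          cases Q₂ with
          | cons h₃ Q₃ => simp [Walk.length_cons] at hQlen
          | nil =>
            rename_i x
            have hnd : (¬ u = x ∧ ¬ u = v) ∧ ¬ x = v := by
              simpa [List.nodup_cons] using hQpath.support_nodup
            obtain ⟨R, hRx⟩ := hyp x (fun h => hnd.1.1 h.symm) hnd.2
            have hRx' : x ∉ (R.toPath : G.Walk u v).support :=
              fun h => hRx (R.support_toPath_subset h)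
            refine ⟨Walk.cons h₁ (Walk.cons h₂ Walk.nil), R.toPath, hQpath,
              (R.toPath).isPath, ?_, ?_⟩
            · intro hEq
              apply hRx'
              rw [← hEq]
              simp
            · intro y hy1 hy2
              simp only [Walk.support_cons, Walk.support_nil, List.mem_cons,
                List.not_mem_nil, or_false] at hy1
              rcases hy1 with rfl | rfl | rfl
              · exact Or.inl rfl
              · exact absurd hy2 hRx'
              · exact Or.inr rfl
    · -- inductive step: dist = m + 3
      -- decompose the shortest path as P.concat (edge w v)
      cases Q with
      | nil => exact absurd (hreach.dist_eq_zero_iff.mp (by simpa using hQlen.symm ▸ hd)) hne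
      | cons h₁ Q₁ =>
        obtain ⟨w, P, hwv, hQeq⟩ := Walk.exists_cons_eq_concat h₁ Q₁
        rw [hQeq] at hQlen hQpath
        have hPlen : P.length = m + 2 := by
          have := Walk.length_concat P hwv
          omega
        have hPpath : P.IsPath := by
          rw [Walk.concat_eq_append] at hQpath
          exact hQpath.of_append_left
        have hvP : v ∉ P.support := by
          have hnd := hQpath.support_nodup
          rw [Walk.support_concat, List.nodup_append] at hnd
          exact fun h => hnd.2.2 v h v (List.mem_singleton.mpr rfl) rfl
        have hreach_uw : G.Reachable u w := ⟨P⟩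
        have hduw_le : G.dist u w ≤ m + 2 := hPlen ▸ SimpleGraph.dist_le P
        have hduw_ge : m + 2 ≤ G.dist u w := by
          obtain ⟨S, hSlen⟩ := hreach_uw.exists_walk_length_eq_dist
          have := SimpleGraph.dist_le (S.concat hwv)
          rw [Walk.length_concat, hSlen, hd] at this
          omega
        have hduw : G.dist u w = m + 2 := le_antisymm hduw_le hduw_ge
        have hne_uw : u ≠ w := by
          intro h
          rw [h] at hduw
          simp [SimpleGraph.dist_self] at hduw
        have hnadj_uw : ¬ G.Adj u w := by
          intro h
          have := SimpleGraph.dist_le (Walk.cons h Walk.nil)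
          rw [hduw] at this
          simp at this
        have hyp_uw : ∀ c, c ≠ u → c ≠ w → ∃ W : G.Walk u w, c ∉ W.support := by
          intro c hcu hcw
          by_cases hcv : c = v
          · subst hcv
            obtain ⟨S, hSlen⟩ := hreach_uw.exists_walk_length_eq_dist
            rw [hduw] at hSlen
            refine ⟨S, fun hvS => ?_⟩
            have hsplit := S.take_spec hvS
            have : S.length = (S.takeUntil c hvS).length + (S.dropUntil c hvS).length := by
              rw [← Walk.length_append, hsplit]
            have h1 : G.dist u c ≤ (S.takeUntil c hvS).length := SimpleGraph.dist_le _
            rw [hd] at h1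
            omega
          · obtain ⟨R, hRc⟩ := hyp c hcu hcv
            by_cases hwR : w ∈ R.support
            · exact ⟨R.takeUntil w hwR, fun hc => hRc (R.support_takeUntil_subset hwR hc)⟩
            · refine ⟨R.concat hwv.symm, fun hc => ?_⟩
              rw [Walk.support_concat, List.mem_append] at hc
              rcases hc with hc | hc
              · exact hRc hc
              · exact hcw (List.mem_singleton.mp hc)
        obtain ⟨P₁, P₂, h1, h2, hne12, hdisj⟩ :=
          IH (m + 2) (by omega) u w hduw hne_uw hnadj_uw hreach_uw hyp_uw
        have hvu : v ≠ u := hne.symm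
        have hvw : v ≠ w := fun h => (G.ne_of_adj hwv) h.symm
        by_cases hv1 : v ∈ P₁.support
        · exact extend_case1 hwv hvu hvw P₁ P₂ h1 h2 hdisj hv1
        by_cases hv2 : v ∈ P₂.support
        · exact extend_case1 hwv hvu hvw P₂ P₁ h2 h1
            (fun y a b => hdisj y b a) hv2
        -- v on neither path
        obtain ⟨R, hRw⟩ := hyp w (fun h => hne_uw h.symm) hvw.symm
        have hR'w : w ∉ (R.toPath : G.Walk u v).support :=
          fun h => hRw (R.support_toPath_subset h)
        obtain ⟨z, hzS, W, hW, hWsub, hWuniq⟩ :=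
          exists_suffix_meet {y | y ∈ P₁.support ∨ y ∈ P₂.support}
            (R.toPath : G.Walk u v) (R.toPath).isPath
            ⟨u, Walk.start_mem_support _, Or.inl (Walk.start_mem_support _)⟩
        have hWw : w ∉ W.support := fun h => hR'w (hWsub _ h)
        rcases hzS with hz1 | hz2
        · exact extend_case2 hwv P₁ P₂ h1 h2 hdisj hv2 W hW hz1 hWw
            (fun y hy hS => hWuniq y hy hS)
        · exact extend_case2 hwv P₂ P₁ h2 h1 (fun y a b => hdisj y b a) hv1 W hW hz2 hWw
            (fun y hy hS => hWuniq y hy hS.symm)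

lemma walk_sign_decomp {V : Type*} [Fintype V] [DecidableEq V] {G : SimpleGraph V} (p q : V → ℝ)
    (hq : ∀ a b : V, G.Adj a b → |p a - p b| = |q a - q b|) :
    ∀ {a b : V} (P : G.Walk a b), P.IsPath →
    ∃ (ε δ : ℚ) (c : V → ℚ), (ε = 1 ∨ ε = -1) ∧ (δ = 1 ∨ δ = -1) ∧
      (∀ w, c w ≠ 0 → w ∈ P.support ∧ w ≠ a ∧ w ≠ b) ∧
      (q a - q b = (ε : ℝ) * p a - (δ : ℝ) * p b + ∑ w, (c w : ℝ) * p w) ∧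
      ((ε - δ) + ∑ w, c w = 0) := by
  intro a b P
  induction P with
  | nil =>
    intro _
    exact ⟨1, 1, 0, Or.inl rfl, Or.inl rfl, by simp, by simp, by simp⟩
  | @cons a x b h P ih =>
    intro hp
    have hedge := hq a x h
    obtain ⟨σ, hσ, hσeq⟩ : ∃ σ : ℚ, (σ = 1 ∨ σ = -1) ∧ q a - q x = (σ : ℝ) * (p a - p x) := by
      rcases abs_eq_abs.mp hedge with h' | h'
      · exact ⟨1, Or.inl rfl, by push_cast; linarith⟩
      · exact ⟨-1, Or.inr rfl, by push_cast; linarith⟩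
    by_cases hxb : x = b
    · subst hxb
      refine ⟨σ, σ, 0, hσ, hσ, by simp, ?_, by simp⟩
      simp only [Pi.zero_apply, Rat.cast_zero, zero_mul, Finset.sum_const_zero, add_zero]
      rw [hσeq]; ring
    · obtain ⟨ε', δ', c', hε', hδ', hsupp, heq, hsum⟩ := ih hp.of_cons
      have haP : a ∉ P.support := ((Walk.cons_isPath_iff h P).mp hp).2
      have hsingle : ∀ r : ℚ, ∑ w, ((Pi.single x r : V → ℚ) w : ℝ) * p w = (r : ℝ) * p x := by
        intro r
        rw [Finset.sum_eq_single x]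
        · simp
        · intro w _ hwx
          simp [Pi.single_eq_of_ne hwx]
        · simp
      have hsingleQ : ∀ r : ℚ, ∑ w, (Pi.single x r : V → ℚ) w = r := by
        intro r
        rw [Finset.sum_eq_single x]
        · simp
        · intro w _ hwx
          simp [Pi.single_eq_of_ne hwx]
        · simp
      refine ⟨σ, δ', c' + Pi.single x (ε' - σ), hσ, hδ', ?_, ?_, ?_⟩
      · intro w hw
        by_cases hwx : w = x
        · subst hwx
          exact ⟨by simp [Walk.support_cons, Walk.start_mem_support],
            fun hh => h.ne hh.symm, hxb⟩
        · have hc'w : c' w ≠ 0 := by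
            simpa [Pi.single_eq_of_ne hwx] using hw
          obtain ⟨hwP, hwx', hwb⟩ := hsupp w hc'w
          exact ⟨by simp [Walk.support_cons, hwP], fun hh => haP (hh ▸ hwP), hwb⟩
      · have hsplit : ∑ w, (((c' + Pi.single x (ε' - σ) : V → ℚ) w : ℚ) : ℝ) * p w
            = (∑ w, (c' w : ℝ) * p w) + ((ε' - σ : ℚ) : ℝ) * p x := by
          simp only [Pi.add_apply, Rat.cast_add, add_mul]
          rw [Finset.sum_add_distrib, hsingle]
        rw [hsplit]
        have : q a - q b = (q a - q x) + (q x - q b) := by ring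
        rw [this, hσeq, heq]
        push_cast
        ring
      · have : ∑ w, (c' + Pi.single x (ε' - σ) : V → ℚ) w = (∑ w, c' w) + (ε' - σ) := by
          simp only [Pi.add_apply]
          rw [Finset.sum_add_distrib, hsingleQ]
        rw [this]
        linarith

lemma backward_dir [Fintype V] [DecidableEq V] {G : SimpleGraph V} {u v : V}
    (hne : u ≠ v)
    (P₁ P₂ : G.Walk u v) (h1 : P₁.IsPath) (h2 : P₂.IsPath)
    (hdisj : ∀ w, w ∈ P₁.support → w ∈ P₂.support → w = u ∨ w = v)
    (p : V → ℝ) (hp : AlgebraicIndependent ℚ p)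
    (q : V → ℝ) (hq : ∀ a b : V, G.Adj a b → |p a - p b| = |q a - q b|) :
    |p u - p v| = |q u - q v| := by
  obtain ⟨ε₁, δ₁, c₁, hε₁, hδ₁, hs₁, he₁, hm₁⟩ := walk_sign_decomp p q hq P₁ h1
  obtain ⟨ε₂, δ₂, c₂, hε₂, hδ₂, hs₂, he₂, hm₂⟩ := walk_sign_decomp p q hq P₂ h2
  have hli : LinearIndependent ℚ p := hp.linearIndependent
  set g : V → ℚ := fun w =>
    (ε₁ - ε₂) * (if w = u then 1 else 0) + (δ₂ - δ₁) * (if w = v then 1 else 0)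
      + (c₁ w - c₂ w) with hg
  have hgsum : ∑ w, (g w : ℝ) * p w = 0 := by
    have hsplit : ∑ w, (g w : ℝ) * p w
        = ((ε₁ - ε₂ : ℚ) : ℝ) * p u + ((δ₂ - δ₁ : ℚ) : ℝ) * p v
          + ((∑ w, (c₁ w : ℝ) * p w) - ∑ w, (c₂ w : ℝ) * p w) := by
      have h1 : ∀ w, (g w : ℝ) * p w
          = ((ε₁ - ε₂ : ℚ) : ℝ) * ((if w = u then (1:ℝ) else 0) * p w)
            + ((δ₂ - δ₁ : ℚ) : ℝ) * ((if w = v then (1:ℝ) else 0) * p w)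
            + ((c₁ w : ℝ) * p w - (c₂ w : ℝ) * p w) := by
        intro w
        simp only [hg]
        push_cast
        split_ifs <;> ring
      rw [Finset.sum_congr rfl (fun w _ => h1 w)]
      rw [Finset.sum_add_distrib, Finset.sum_add_distrib, ← Finset.mul_sum, ← Finset.mul_sum,
        Finset.sum_sub_distrib]
      congr 2
      · congr 1
        simp only [ite_mul, one_mul, zero_mul, Finset.sum_ite_eq', Finset.mem_univ, if_true]
      · congr 1
        simp only [ite_mul, one_mul, zero_mul, Finset.sum_ite_eq', Finset.mem_univ, if_true]
    rw [hsplit]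
    push_cast
    linarith [he₁, he₂]
  have hgzero : ∀ w, g w = 0 := by
    apply Fintype.linearIndependent_iff.mp hli
    rw [← hgsum]
    exact Finset.sum_congr rfl fun w _ => (Rat.smul_def _ _)
  have hc₁ : ∀ w, c₁ w = 0 := by
    intro w
    by_contra hw
    obtain ⟨hwP, hwu, hwv⟩ := hs₁ w hw
    have hgw := hgzero w
    simp only [hg, if_neg hwu, if_neg hwv, mul_zero, zero_add, add_zero] at hgw
    have hc₂w : c₂ w ≠ 0 := by
      intro h0
      rw [h0] at hgw
      exact hw (by linarith)
    obtain ⟨hwP₂, _, _⟩ := hs₂ w hc₂w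
    rcases hdisj w hwP hwP₂ with h | h
    · exact hwu h
    · exact hwv h
  have hsum0 : ∑ w, c₁ w = 0 := Finset.sum_eq_zero fun w _ => hc₁ w
  have hεδ : ε₁ = δ₁ := by rw [hsum0, add_zero, sub_eq_zero] at hm₁; exact hm₁
  have hval : q u - q v = (ε₁ : ℝ) * (p u - p v) := by
    rw [he₁, ← hεδ]
    have : ∑ w, (c₁ w : ℝ) * p w = 0 := Finset.sum_eq_zero fun w _ => by simp [hc₁ w]
    rw [this]
    ring
  rcases hε₁ with h | h <;> rw [hval, h] <;> push_cast <;>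
    simp [abs_mul, abs_neg, abs_sub_comm]

lemma exists_generic (V : Type u) [Fintype V] : ∃ p : V → ℝ, AlgebraicIndependent ℚ p := by
  obtain ⟨s, hs⟩ := exists_isTranscendenceBasis ℚ ℝ
  have halg : AlgebraicIndependent ℚ ((↑) : s → ℝ) := hs.1
  have hinf : ℵ₀ ≤ #s := by
    by_contra hlt
    push_neg at hlt
    rcases isEmpty_or_nonempty s with hemp | hne
    · have : Algebra.IsAlgebraic ℚ ℝ := hs.isEmpty_iff_isAlgebraic.mp hemp
      have h1 : #ℝ ≤ max #ℚ ℵ₀ := Algebra.IsAlgebraic.cardinalMk_le_max ℚ ℝ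
      rw [Cardinal.mkRat, max_self, Cardinal.mk_real] at h1
      exact absurd h1 (not_le.mpr Cardinal.aleph0_lt_continuum)
    · have hcard := hs.lift_cardinalMk_eq_max_lift
      simp only [Cardinal.lift_id] at hcard
      rw [Cardinal.mk_real, Cardinal.mkRat] at hcard
      have : (𝔠 : Cardinal) ≤ ℵ₀ := by
        rw [hcard]
        exact sup_le (sup_le le_rfl hlt.le) le_rfl
      exact absurd this (not_le.mpr Cardinal.aleph0_lt_continuum)
  have hVle : Cardinal.lift.{0} #V ≤ Cardinal.lift.{u} #s := by
    calc Cardinal.lift.{0} #V ≤ ℵ₀ := (Cardinal.lift_lt_aleph0.mpr (Cardinal.lt_aleph0_of_finite V)).le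
    _ ≤ Cardinal.lift.{u} #s := by
        rw [← Cardinal.lift_aleph0.{u, 0}]
        exact Cardinal.lift_le.mpr hinf
  obtain ⟨f⟩ := Cardinal.lift_mk_le'.mp hVle
  exact ⟨fun w => (f w : ℝ), halg.comp f f.injective⟩

lemma forward_not_reachable {G : SimpleGraph V} {u v : V}
    (hnr : ¬ G.Reachable u v)
    (p : V → ℝ) (hp : AlgebraicIndependent ℚ p) :
    ∃ q : V → ℝ, (∀ a b : V, G.Adj a b → |p a - p b| = |q a - q b|) ∧
      |p u - p v| ≠ |q u - q v| := by
  classical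
  refine ⟨fun x => if G.Reachable v x then -p x else p x, ?_, ?_⟩
  · intro a b hab
    dsimp only
    by_cases hra : G.Reachable v a
    · rw [if_pos hra, if_pos (hra.trans hab.reachable), neg_sub_neg, abs_sub_comm]
    · rw [if_neg hra, if_neg (fun h => hra (h.trans hab.symm.reachable))]
  · have hqu : (if G.Reachable v u then -p u else p u) = p u :=
      if_neg (fun h => hnr h.symm)
    have hqv : (if G.Reachable v v then -p v else p v) = -p v := if_pos (Reachable.refl v)
    simp only [hqu, hqv]
    intro habs
    rcases abs_eq_abs.mp habs with h | h
    · exact hp.linearIndependent.ne_zero v (by linarith)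
    · exact hp.linearIndependent.ne_zero u (by linarith)

lemma forward_cut {G : SimpleGraph V} {u v c : V}
    (hcu : c ≠ u) (hcv : c ≠ v)
    (hsep : ∀ W : G.Walk u v, c ∈ W.support)
    (p : V → ℝ) (hp : AlgebraicIndependent ℚ p) :
    ∃ q : V → ℝ, (∀ a b : V, G.Adj a b → |p a - p b| = |q a - q b|) ∧
      |p u - p v| ≠ |q u - q v| := by
  classical
  set A : Set V := {x | ∃ W : G.Walk v x, c ∉ W.support} with hA
  have hvA : v ∈ A := ⟨Walk.nil, by simp [hcv]⟩
  have hcA : c ∉ A := by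
    rintro ⟨W, hW⟩
    exact hW (Walk.end_mem_support W)
  have huA : u ∉ A := by
    rintro ⟨W, hW⟩
    have := hsep W.reverse
    rw [Walk.support_reverse] at this
    exact hW (List.mem_reverse.mp this)
  have hcross : ∀ a b : V, G.Adj a b → a ∈ A → b ∉ A → b = c := by
    intro a b hab haA hbA
    by_contra hbc
    obtain ⟨W, hW⟩ := haA
    refine hbA ⟨W.concat hab, ?_⟩
    rw [Walk.support_concat, List.mem_append]
    rintro (h | h)
    · exact hW h
    · exact hbc (List.mem_singleton.mp h).symm
  refine ⟨fun x => if x ∈ A then 2 * p c - p x else p x, ?_, ?_⟩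
  · intro a b hab
    dsimp only
    by_cases haA : a ∈ A <;> by_cases hbA : b ∈ A
    · rw [if_pos haA, if_pos hbA,
        show (2 * p c - p a) - (2 * p c - p b) = -(p a - p b) from by ring, abs_neg]
    · have hbc : b = c := hcross a b hab haA hbA
      subst hbc
      rw [if_pos haA, if_neg hbA,
        show 2 * p b - p a - p b = -(p a - p b) from by ring, abs_neg]
    · have hac : a = c := hcross b a hab.symm hbA haA
      subst hac
      rw [if_neg haA, if_pos hbA,
        show p a - (2 * p a - p b) = -(p a - p b) from by ring, abs_neg]
    · rw [if_neg haA, if_neg hbA]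
  · dsimp only
    rw [if_neg huA, if_pos hvA]
    intro habs
    have hinj : Function.Injective p := hp.linearIndependent.injective
    rcases abs_eq_abs.mp habs with h | h
    · exact hcv (hinj (show p c = p v by linarith))
    · exact hcu (hinj (show p c = p u by linarith))

end GLAux

/-- For a nonadjacent pair `u, v` of vertices of a graph `G`, the pair
`{u,v}` is globally linked in `G` in `ℝ¹` (i.e. for every generic realization
`p : V → ℝ` and every equivalent realization `q`, the distance `|p u - p v|` equals
`|q u - q v|`) if and only if there exist two internally disjoint `u,v`-paths in `G`,
i.e. `κ_G(u,v) ≥ 2`. A realization is generic if its coordinates are algebraically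
independent over `ℚ`; realizations `p, q` are equivalent if corresponding edge lengths
agree. -/
theorem globally_linked_in_dim_one_iff_two_disjoint_paths
    {V : Type*} [Fintype V] (G : SimpleGraph V) (u v : V)
    (hne : u ≠ v) (hnadj : ¬ G.Adj u v) :
    (∀ p : V → ℝ, AlgebraicIndependent ℚ p →
      ∀ q : V → ℝ, (∀ a b : V, G.Adj a b → |p a - p b| = |q a - q b|) →
        |p u - p v| = |q u - q v|) ↔
    (∃ P₁ P₂ : G.Walk u v, P₁.IsPath ∧ P₂.IsPath ∧ P₁ ≠ P₂ ∧
      ∀ w : V, w ∈ P₁.support → w ∈ P₂.support → w = u ∨ w = v) := by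
  classical
  constructor
  · intro hLHS
    by_cases hyp : ∀ c, c ≠ u → c ≠ v → ∃ W : G.Walk u v, c ∉ W.support
    · by_cases hreach : G.Reachable u v
      · exact GLAux.menger_two (G.dist u v) u v rfl hne hnadj hreach hyp
      · obtain ⟨p, hp⟩ := GLAux.exists_generic V
        obtain ⟨q, hq, hne'⟩ := GLAux.forward_not_reachable hreach p hp
        exact absurd (hLHS p hp q hq) hne'
    · push_neg at hyp
      obtain ⟨c, hcu, hcv, hsep⟩ := hyp
      obtain ⟨p, hp⟩ := GLAux.exists_generic V
      obtain ⟨q, hq, hne'⟩ := GLAux.forward_cut hcu hcv hsep p hp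
      exact absurd (hLHS p hp q hq) hne'
  · rintro ⟨P₁, P₂, h1, h2, _, hdisj⟩ p hp q hq
    exact GLAux.backward_dir hne P₁ P₂ h1 h2 hdisj p hp q hq
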